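/- For the type (A) ILP min {cᵀx : Ax = b, x ≥ 0} over intervals (𝐀,𝐛,𝐜), the equality f̲ = max { min_{b ∈ 𝐛} bᵀy : Aᵀy ≤ c for all A ∈ 𝐀 and all c ∈ 𝐜 } holds if and only if the primal ILP is weakly feasible or the dual interval system Aᵀy ≤ c (over all A ∈ 𝐀, c ∈ 𝐜) has a strong solution. -/

import Mathlib

open Matrix Finset Set

/-- Membership of a real matrix in the interval matrix `[AL, AU]`. -/
def memI {m n : ℕ} (AL AU A : Matrix (Fin m) (Fin n) ℝ) : Prop :=
  ∀ i j, AL i j ≤ A i j ∧ A i j ≤ AU i j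

/-- Optimal value of the primal type-(A) LP `min cᵀx  s.t.  Ax = b, x ≥ 0`. -/
noncomputable def primalValA {m n : ℕ} (A : Matrix (Fin m) (Fin n) ℝ) (b : Fin m → ℝ)
    (c : Fin n → ℝ) : EReal :=
  sInf ((fun x => ((c ⬝ᵥ x : ℝ) : EReal)) '' {x | A.mulVec x = b ∧ 0 ≤ x})

/-- Optimal value of the dual type-(A) LP `max bᵀy  s.t.  Aᵀy ≤ c`. -/
noncomputable def dualValA {m n : ℕ} (A : Matrix (Fin m) (Fin n) ℝ) (b : Fin m → ℝ)
    (c : Fin n → ℝ) : EReal :=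
  sSup ((fun y => ((b ⬝ᵥ y : ℝ) : EReal)) '' {y | Aᵀ.mulVec y ≤ c})


theorem farkas_fin {κ : Type*} [Fintype κ] :
    ∀ (n : ℕ) (a : Fin n → κ → ℝ) (b : κ → ℝ),
    (∃ l : Fin n → ℝ, 0 ≤ l ∧ ∑ j, l j • a j = b) ∨
    (∃ y : κ → ℝ, (∀ j, a j ⬝ᵥ y ≤ 0) ∧ 0 < b ⬝ᵥ y) := by
  intro n
  induction n with
  | zero =>
    intro a b
    by_cases hb : b = 0
    · exact Or.inl ⟨0, le_refl _, by simp [hb]⟩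
    · refine Or.inr ⟨b, fun j => j.elim0, ?_⟩
      have h0 : (0:ℝ) ≤ b ⬝ᵥ b := Finset.sum_nonneg fun i _ => mul_self_nonneg _
      rcases h0.lt_or_eq with h | h
      · exact h
      · exact absurd ((dotProduct_self_eq_zero).mp h.symm) hb
  | succ n ih =>
    intro a b
    rcases ih (fun j => a j.castSucc) b with ⟨l, hl, hsum⟩ | ⟨y, hy, hby⟩
    · refine Or.inl ⟨Fin.snoc l 0, ?_, ?_⟩
      · intro j
        induction j using Fin.lastCases with
        | last => simp
        | cast j => simpa using hl j
      · rw [Fin.sum_univ_castSucc]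
        simp [Fin.snoc, hsum]
    · set α := a (Fin.last n) ⬝ᵥ y with hα
      by_cases hαpos : 0 < α
      swap
      · exact Or.inr ⟨y, fun j => Fin.lastCases (le_of_not_gt hαpos) (fun i => hy i) j, hby⟩
      have hαne : α ≠ 0 := ne_of_gt hαpos
      set aa : Fin n → κ → ℝ :=
        fun j => a j.castSucc - ((a j.castSucc ⬝ᵥ y) / α) • a (Fin.last n) with haa
      set bb : κ → ℝ := b - ((b ⬝ᵥ y) / α) • a (Fin.last n) with hbb
      rcases ih aa bb with ⟨l, hl, hsum⟩ | ⟨y', hy', hby'⟩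
      · -- reconstruct nonneg combination for b
        set t : ℝ := ∑ j, l j * (a j.castSucc ⬝ᵥ y) with ht
        have ht0 : t ≤ 0 :=
          Finset.sum_nonpos fun j _ => mul_nonpos_of_nonneg_of_nonpos (hl j) (hy j)
        set μ : ℝ := (b ⬝ᵥ y - t) / α with hμ
        have hμ0 : 0 ≤ μ := div_nonneg (by linarith) hαpos.le
        refine Or.inl ⟨Fin.snoc l μ, ?_, ?_⟩
        · intro j
          induction j using Fin.lastCases with
          | last => simpa using hμ0
          | cast j => simpa using hl j
        · rw [Fin.sum_univ_castSucc]
          simp only [Fin.snoc_castSucc, Fin.snoc_last]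
          have expand : ∑ j, l j • aa j
              = (∑ j : Fin n, l j • a j.castSucc) - (t / α) • a (Fin.last n) := by
            rw [haa]
            simp only [smul_sub, smul_smul]
            rw [Finset.sum_sub_distrib, ← Finset.sum_smul]
            congr 2
            rw [ht, Finset.sum_div]
            congr 1
            ext j
            ring
          rw [expand] at hsum
          have : (∑ j : Fin n, l j • a j.castSucc)
              = b + ((t - b ⬝ᵥ y) / α) • a (Fin.last n) := by
            rw [hbb] at hsum
            have := sub_eq_sub_iff_add_eq_add.mp hsum
            funext k
            have hk := congrFun hsum k
            simp only [Pi.sub_apply, Pi.smul_apply, smul_eq_mul] at hk ⊢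
            simp only [Pi.add_apply, Pi.smul_apply, smul_eq_mul]
            field_simp at hk ⊢
            linarith
          rw [this]
          funext k
          simp only [Pi.add_apply, Pi.smul_apply, smul_eq_mul, hμ]
          field_simp
          ring
      · -- reconstruct separating functional
        set y'' : κ → ℝ := y' - ((a (Fin.last n) ⬝ᵥ y') / α) • y with hy''
        refine Or.inr ⟨y'', ?_, ?_⟩
        · intro j
          induction j using Fin.lastCases with
          | last =>
            rw [hy'']
            rw [dotProduct_sub, dotProduct_smul]
            simp only [smul_eq_mul, ← hα]
            field_simp
            simp
          | cast j =>
            have h1 := hy' j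
            rw [haa] at h1
            rw [sub_dotProduct, smul_dotProduct, smul_eq_mul] at h1
            rw [hy'', dotProduct_sub, dotProduct_smul, smul_eq_mul]
            calc a j.castSucc ⬝ᵥ y' - a (Fin.last n) ⬝ᵥ y' / α * (a j.castSucc ⬝ᵥ y)
                = a j.castSucc ⬝ᵥ y' - a j.castSucc ⬝ᵥ y / α * (a (Fin.last n) ⬝ᵥ y') := by ring
              _ ≤ 0 := h1
        · have h2 := hby'
          rw [hbb, sub_dotProduct, smul_dotProduct, smul_eq_mul] at h2
          rw [hy'', dotProduct_sub, dotProduct_smul, smul_eq_mul]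
          calc (0:ℝ) < b ⬝ᵥ y' - b ⬝ᵥ y / α * (a (Fin.last n) ⬝ᵥ y') := h2
            _ = b ⬝ᵥ y' - a (Fin.last n) ⬝ᵥ y' / α * (b ⬝ᵥ y) := by ring

theorem farkas_gen {κ ι : Type*} [Fintype κ] [Fintype ι] (a : ι → κ → ℝ) (b : κ → ℝ) :
    (∃ l : ι → ℝ, 0 ≤ l ∧ ∑ j, l j • a j = b) ∨
    (∃ y : κ → ℝ, (∀ j, a j ⬝ᵥ y ≤ 0) ∧ 0 < b ⬝ᵥ y) := by
  obtain ⟨e⟩ : Nonempty (ι ≃ Fin (Fintype.card ι)) := ⟨Fintype.equivFin ι⟩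
  rcases farkas_fin (Fintype.card ι) (fun i => a (e.symm i)) b with ⟨l, hl, hsum⟩ | h
  · refine Or.inl ⟨fun j => l (e j), fun j => hl (e j), ?_⟩
    rw [← hsum, ← Equiv.sum_comp e.symm (fun j => l (e j) • a j)]
    simp
  · exact Or.inr (by simpa using ⟨h.choose, fun j => by simpa using h.choose_spec.1 (e j),
      h.choose_spec.2⟩)

/-- Farkas for inequality systems: either `∃ x ≥ 0` with `∑ x j • a j ≤ b`, or
there is `y ≥ 0` with `a j ⬝ᵥ y ≥ 0` for all `j` and `b ⬝ᵥ y < 0`. -/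
theorem farkas_ineq {κ ι : Type*} [Fintype κ] [DecidableEq κ] [Fintype ι]
    (a : ι → κ → ℝ) (b : κ → ℝ) :
    (∃ x : ι → ℝ, 0 ≤ x ∧ ∑ j, x j • a j ≤ b) ∨
    (∃ y : κ → ℝ, 0 ≤ y ∧ (∀ j, 0 ≤ a j ⬝ᵥ y) ∧ b ⬝ᵥ y < 0) := by
  rcases farkas_gen (Sum.elim a (fun k : κ => Pi.single k (1:ℝ))) b with ⟨l, hl, hsum⟩ | ⟨y, hy, hby⟩
  · refine Or.inl ⟨fun j => l (Sum.inl j), fun j => hl _, ?_⟩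
    intro k
    have hk := congrFun hsum k
    simp only [Fintype.sum_sum_type, Sum.elim_inl, Sum.elim_inr, Pi.add_apply,
      Finset.sum_apply] at hk
    have h2 : 0 ≤ ∑ x : κ, (l (Sum.inr x) • (Pi.single x (1:ℝ) : κ → ℝ)) k :=
      Finset.sum_nonneg fun k' _ => by
        simp only [Pi.smul_apply, smul_eq_mul]
        rcases eq_or_ne k' k with rfl | hne
        · simpa using hl (Sum.inr k')
        · simp [Pi.single_eq_of_ne hne.symm]
    have hgoal : (∑ j : ι, l (Sum.inl j) • a j) k ≤ b k := by
      rw [Finset.sum_apply]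
      linarith
    simpa using hgoal
  · refine Or.inr ⟨-y, ?_, ?_, ?_⟩
    · intro k
      have := hy (Sum.inr k)
      simp only [Sum.elim_inr] at this
      rw [single_dotProduct, one_mul] at this
      simpa using this
    · intro j
      have := hy (Sum.inl j)
      simp only [Sum.elim_inl] at this
      rw [dotProduct_neg]
      linarith
    · rw [dotProduct_neg]; linarith

section Core
variable {ι κ : Type*} [Fintype ι] [Fintype κ]

lemma sum_smul_dotProduct (x : ι → ℝ) (a : ι → κ → ℝ) (u : κ → ℝ) :
    (∑ j, x j • a j) ⬝ᵥ u = ∑ j, x j * (a j ⬝ᵥ u) := by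
  simp only [dotProduct, Finset.sum_apply, Pi.smul_apply, smul_eq_mul, Finset.sum_mul,
    Finset.mul_sum]
  rw [Finset.sum_comm]
  congr 1; ext k; congr 1; ext j; ring

lemma dot_mono_right {v w u : κ → ℝ} (h : v ≤ w) (hu : 0 ≤ u) : v ⬝ᵥ u ≤ w ⬝ᵥ u :=
  Finset.sum_le_sum fun k _ => mul_le_mul_of_nonneg_right (h k) (hu k)

/-- weak duality -/
lemma lp_weak {a : ι → κ → ℝ} {b : κ → ℝ} {c : ι → ℝ} {x : ι → ℝ} {u : κ → ℝ}
    (hx0 : 0 ≤ x) (hxf : ∑ j, x j • a j ≤ b) (hu0 : 0 ≤ u) (huf : ∀ j, -c j ≤ a j ⬝ᵥ u) :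
    -(b ⬝ᵥ u) ≤ c ⬝ᵥ x := by
  have h1 : (∑ j, x j • a j) ⬝ᵥ u ≤ b ⬝ᵥ u := dot_mono_right hxf hu0
  rw [sum_smul_dotProduct] at h1
  have h2 : ∑ j, x j * (-c j) ≤ ∑ j, x j * (a j ⬝ᵥ u) :=
    Finset.sum_le_sum fun j _ => mul_le_mul_of_nonneg_left (huf j) (hx0 j)
  have h3 : c ⬝ᵥ x = ∑ j, c j * x j := rfl
  have h4 : ∑ j, x j * (-c j) = -(c ⬝ᵥ x) := by
    rw [h3, ← Finset.sum_neg_distrib]; congr 1; ext j; ring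
  linarith

variable [DecidableEq ι] [DecidableEq κ]

theorem lp_duality (a : ι → κ → ℝ) (b : κ → ℝ) (c : ι → ℝ) :
    (sInf ((fun x => ((c ⬝ᵥ x : ℝ) : EReal)) '' {x | 0 ≤ x ∧ ∑ j, x j • a j ≤ b}) =
     sSup ((fun u => ((-(b ⬝ᵥ u) : ℝ) : EReal)) '' {u | 0 ≤ u ∧ ∀ j, -c j ≤ a j ⬝ᵥ u})) ↔
    ({x : ι → ℝ | 0 ≤ x ∧ ∑ j, x j • a j ≤ b}.Nonempty ∨
     {u : κ → ℝ | 0 ≤ u ∧ ∀ j, -c j ≤ a j ⬝ᵥ u}.Nonempty) := by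
  set P : Set (ι → ℝ) := {x | 0 ≤ x ∧ ∑ j, x j • a j ≤ b} with hPdef
  set D : Set (κ → ℝ) := {u | 0 ≤ u ∧ ∀ j, -c j ≤ a j ⬝ᵥ u} with hDdef
  constructor
  · -- if both infeasible, equality fails
    intro heq
    by_contra hcon
    push_neg at hcon
    rw [hcon.1, hcon.2] at heq
    simp only [Set.image_empty, sInf_empty, sSup_empty] at heq
    exact (top_ne_bot (α := EReal)) heq
  · intro h
    by_cases hPne : P.Nonempty
    · obtain ⟨x₀, hx₀⟩ := hPne
      by_cases hDne : D.Nonempty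
      · -- both feasible: strong duality
        obtain ⟨u₀, hu₀⟩ := hDne
        refine le_antisymm ?_ ?_
        swap
        · -- weak duality : sSup ≤ sInf
          refine sSup_le ?_
          rintro _ ⟨u, hu, rfl⟩
          refine le_sInf ?_
          rintro _ ⟨x, hx, rfl⟩
          exact EReal.coe_le_coe_iff.mpr (lp_weak hx.1 hx.2 hu.1 hu.2)
        · -- strong direction via combined system
          rcases farkas_ineq
              (Sum.elim
                (fun j : ι => Sum.elim (fun k => a j k)
                  (Sum.elim (fun _ : ι => (0:ℝ)) (fun _ : Unit => c j)))
                (fun k0 : κ => Sum.elim (fun _ : κ => (0:ℝ))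
                  (Sum.elim (fun j => -(a j k0)) (fun _ : Unit => b k0))))
              (Sum.elim b (Sum.elim c (fun _ : Unit => (0:ℝ)))) with
            ⟨z, hz0, hzf⟩ | ⟨y, hy0, hyA, hyb⟩
          · -- optimal pair found
            set x : ι → ℝ := fun j => z (Sum.inl j) with hxdef
            set u : κ → ℝ := fun k => z (Sum.inr k) with hudef
            have hx : x ∈ P := by
              refine ⟨fun j => hz0 _, fun k => ?_⟩
              have h := hzf (Sum.inl k)
              simp only [Fintype.sum_sum_type, Finset.sum_apply, Pi.add_apply, Pi.smul_apply,
                smul_eq_mul, Sum.elim_inl, Sum.elim_inr, mul_zero, Finset.sum_const_zero,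
                add_zero] at h
              simpa [Finset.sum_apply] using h
            have hu : u ∈ D := by
              refine ⟨fun k => hz0 _, fun j => ?_⟩
              have h := hzf (Sum.inr (Sum.inl j))
              simp only [Fintype.sum_sum_type, Finset.sum_apply, Pi.add_apply, Pi.smul_apply,
                smul_eq_mul, Sum.elim_inl, Sum.elim_inr, mul_zero, Finset.sum_const_zero,
                zero_add] at h
              have heq2 : ∑ k0, z (Sum.inr k0) * -(a j k0) = -(a j ⬝ᵥ u) := by
                rw [dotProduct, ← Finset.sum_neg_distrib]
                exact Finset.sum_congr rfl fun k0 _ => by rw [hudef]; ring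
              rw [heq2] at h
              linarith
            have hobj : c ⬝ᵥ x + b ⬝ᵥ u ≤ 0 := by
              have h := hzf (Sum.inr (Sum.inr ()))
              simp only [Fintype.sum_sum_type, Finset.sum_apply, Pi.add_apply, Pi.smul_apply,
                smul_eq_mul, Sum.elim_inl, Sum.elim_inr] at h
              have e1 : ∑ j, z (Sum.inl j) * c j = c ⬝ᵥ x := by
                rw [dotProduct]; exact Finset.sum_congr rfl fun j _ => by rw [hxdef]; ring
              have e2 : ∑ k0, z (Sum.inr k0) * b k0 = b ⬝ᵥ u := by
                rw [dotProduct]; exact Finset.sum_congr rfl fun k0 _ => by rw [hudef]; ring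
              rw [e1, e2] at h
              exact h
            calc sInf ((fun x => ((c ⬝ᵥ x : ℝ) : EReal)) '' P)
                ≤ ((c ⬝ᵥ x : ℝ) : EReal) := sInf_le ⟨x, hx, rfl⟩
              _ ≤ ((-(b ⬝ᵥ u) : ℝ) : EReal) := by exact_mod_cast by linarith
              _ ≤ sSup ((fun u => ((-(b ⬝ᵥ u) : ℝ) : EReal)) '' D) := le_sSup ⟨u, hu, rfl⟩
          · -- alternative system: contradiction with feasibility of both
            exfalso
            set v : κ → ℝ := fun k => y (Sum.inl k) with hvdef
            set w : ι → ℝ := fun j => y (Sum.inr (Sum.inl j)) with hwdef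
            set τ : ℝ := y (Sum.inr (Sum.inr ())) with hτdef
            have hτ0 : 0 ≤ τ := hy0 _
            have hv0 : 0 ≤ v := fun k => hy0 _
            have hw0 : 0 ≤ w := fun j => hy0 _
            have hvj : ∀ j, 0 ≤ a j ⬝ᵥ v + c j * τ := by
              intro j
              have h := hyA (Sum.inl j)
              simp only [Sum.elim_inl, dotProduct, Fintype.sum_sum_type, Sum.elim_inr,
                zero_mul, Finset.sum_const_zero] at h
              simpa [dotProduct, Fin.sum_univ_succ] using h
            have hwk : ∀ k, ∑ j, w j * a j k ≤ τ * b k := by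
              intro k
              have h := hyA (Sum.inr k)
              simp only [Sum.elim_inl, Sum.elim_inr, dotProduct, Fintype.sum_sum_type,
                zero_mul, Finset.sum_const_zero, zero_add] at h
              have e1 : ∑ j, -(a j k) * y (Sum.inr (Sum.inl j)) = -∑ j, w j * a j k := by
                rw [← Finset.sum_neg_distrib]
                exact Finset.sum_congr rfl fun j _ => by rw [hwdef]; ring
              rw [e1] at h
              have e2 : ∑ x : Unit, b k * y (Sum.inr (Sum.inr x)) = b k * τ := by
                simp only [Finset.univ_unique, Finset.sum_singleton]
                rfl
              rw [e2] at h
              nlinarith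
            have hobj : b ⬝ᵥ v + c ⬝ᵥ w < 0 := by
              have h := hyb
              simp only [dotProduct, Fintype.sum_sum_type, Sum.elim_inl, Sum.elim_inr,
                zero_mul, Finset.sum_const_zero, add_zero] at h
              have e1 : b ⬝ᵥ v = ∑ k, b k * y (Sum.inl k) := rfl
              have e2 : c ⬝ᵥ w = ∑ j, c j * y (Sum.inr (Sum.inl j)) := rfl
              rw [e1, e2]
              linarith
            rcases eq_or_lt_of_le hτ0 with hτz | hτpos
            · -- τ = 0 case
              have h1 : 0 ≤ b ⬝ᵥ v := by
                have e1 : (∑ j, x₀ j • a j) ⬝ᵥ v ≤ b ⬝ᵥ v := dot_mono_right hx₀.2 hv0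
                rw [sum_smul_dotProduct] at e1
                have e2 : 0 ≤ ∑ j, x₀ j * (a j ⬝ᵥ v) :=
                  Finset.sum_nonneg fun j _ => mul_nonneg (hx₀.1 j) (by
                    have := hvj j; rw [← hτz] at this; simpa using this)
                linarith
              have h2 : 0 ≤ c ⬝ᵥ w := by
                have e3 : (∑ j, w j • a j) ⬝ᵥ u₀ ≤ 0 := by
                  have : ∑ j, w j • a j ≤ 0 := by
                    intro k
                    have := hwk k
                    rw [← hτz] at this
                    simpa [Finset.sum_apply] using this
                  have := dot_mono_right this hu₀.1
                  simpa using this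
                rw [sum_smul_dotProduct] at e3
                have e4 : ∑ j, w j * (-c j) ≤ ∑ j, w j * (a j ⬝ᵥ u₀) :=
                  Finset.sum_le_sum fun j _ => mul_le_mul_of_nonneg_left (hu₀.2 j) (hw0 j)
                have e5 : ∑ j, w j * (-c j) = -(c ⬝ᵥ w) := by
                  rw [dotProduct, ← Finset.sum_neg_distrib]
                  exact Finset.sum_congr rfl fun j _ => by ring
                linarith
              linarith
            · -- τ > 0 case : scale to get feasible pair violating weak duality
              have hx1 : (τ⁻¹ • w) ∈ P := by
                refine ⟨fun j => by
                  simp only [Pi.smul_apply, smul_eq_mul]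
                  exact mul_nonneg (inv_nonneg.mpr hτ0) (hw0 j), fun k => ?_⟩
                have h := hwk k
                have e1 : (∑ j, (τ⁻¹ • w) j • a j) k = τ⁻¹ * ∑ j, w j * a j k := by
                  simp only [Finset.sum_apply, Pi.smul_apply, smul_eq_mul, Finset.mul_sum]
                  exact Finset.sum_congr rfl fun j _ => by ring
                rw [e1]
                rw [inv_mul_le_iff₀ hτpos]
                linarith
              have hu1 : (τ⁻¹ • v) ∈ D := by
                refine ⟨fun k => by
                  simp only [Pi.smul_apply, smul_eq_mul]
                  exact mul_nonneg (inv_nonneg.mpr hτ0) (hv0 k), fun j => ?_⟩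
                have h := hvj j
                have e1 : a j ⬝ᵥ (τ⁻¹ • v) = τ⁻¹ * (a j ⬝ᵥ v) := by
                  rw [dotProduct_smul]; simp
                rw [e1]
                have hvjj := hvj j
                have h2 : 0 ≤ τ⁻¹ * (a j ⬝ᵥ v + c j * τ) :=
                  mul_nonneg (inv_nonneg.mpr hτ0) hvjj
                have h4 : τ⁻¹ * (a j ⬝ᵥ v + c j * τ) = τ⁻¹ * (a j ⬝ᵥ v) + c j := by
                  field_simp
                linarith
              have hweak := lp_weak hx1.1 hx1.2 hu1.1 hu1.2
              have e2 : c ⬝ᵥ (τ⁻¹ • w) = τ⁻¹ * (c ⬝ᵥ w) := by rw [dotProduct_smul]; simp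
              have e3 : b ⬝ᵥ (τ⁻¹ • v) = τ⁻¹ * (b ⬝ᵥ v) := by rw [dotProduct_smul]; simp
              rw [e2, e3] at hweak
              have hτinv : 0 < τ⁻¹ := inv_pos.mpr hτpos
              nlinarith
      · -- P feasible, D empty : both values are ⊥
        rw [Set.not_nonempty_iff_eq_empty.mp hDne]
        simp only [Set.image_empty, sSup_empty]
        rw [sInf_eq_bot]
        intro vE hvE
        rcases EReal.lt_iff_exists_real_btwn.mp hvE with ⟨r, hr1, hr2⟩
        rcases farkas_ineq (fun k : κ => fun j : ι => -(a j k)) c with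
          ⟨u, hu0, huf⟩ | ⟨d, hd0, hdA, hdc⟩
        · exfalso
          refine hDne ⟨u, hu0, fun j => ?_⟩
          have h := huf j
          have e1 : (∑ k, u k • fun j' => -(a j' k)) j = -(a j ⬝ᵥ u) := by
            simp only [Finset.sum_apply, Pi.smul_apply, smul_eq_mul, dotProduct,
              ← Finset.sum_neg_distrib]
            exact Finset.sum_congr rfl fun k _ => by ring
          rw [e1] at h
          linarith
        · -- unbounded primal
          have hdA' : ∀ k, (∑ j, d j • a j) k ≤ 0 := by
            intro k
            have h := hdA k
            simp only [dotProduct] at h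
            have e1 : ∑ j, -(a j k) * d j = -∑ j, d j * a j k := by
              rw [← Finset.sum_neg_distrib]
              exact Finset.sum_congr rfl fun j _ => by ring
            rw [e1] at h
            simp only [Finset.sum_apply, Pi.smul_apply, smul_eq_mul]
            linarith
          set t : ℝ := max 0 ((r - 1 - c ⬝ᵥ x₀) / (c ⬝ᵥ d)) with htdef
          have ht0 : 0 ≤ t := le_max_left _ _
          have hmem : x₀ + t • d ∈ P := by
            refine ⟨fun j => by
              simp only [Pi.add_apply, Pi.smul_apply, smul_eq_mul, Pi.zero_apply]
              have h1 : (0:ℝ) ≤ x₀ j := hx₀.1 j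
              have h2 : (0:ℝ) ≤ d j := hd0 j
              nlinarith, fun k => ?_⟩
            have e1 : (∑ j, (x₀ + t • d) j • a j) k
                = (∑ j, x₀ j • a j) k + t * (∑ j, d j • a j) k := by
              simp only [Finset.sum_apply, Pi.add_apply, Pi.smul_apply, smul_eq_mul,
                Finset.mul_sum, ← Finset.sum_add_distrib]
              exact Finset.sum_congr rfl fun j _ => by ring
            rw [e1]
            have h1 := hx₀.2 k
            have h2 := hdA' k
            nlinarith
          have hval : c ⬝ᵥ (x₀ + t • d) < r := by
            have e2 : c ⬝ᵥ (x₀ + t • d) = c ⬝ᵥ x₀ + t * (c ⬝ᵥ d) := by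
              rw [dotProduct_add, dotProduct_smul]; simp
            rw [e2]
            have hle : (r - 1 - c ⬝ᵥ x₀) / (c ⬝ᵥ d) ≤ t := le_max_right _ _
            have h3 : t * (c ⬝ᵥ d) ≤ ((r - 1 - c ⬝ᵥ x₀) / (c ⬝ᵥ d)) * (c ⬝ᵥ d) :=
              mul_le_mul_of_nonpos_right hle hdc.le
            rw [div_mul_cancel₀ _ (ne_of_lt hdc)] at h3
            linarith
          exact ⟨_, ⟨x₀ + t • d, hmem, rfl⟩, lt_trans (EReal.coe_lt_coe_iff.mpr hval) hr2⟩
    · -- P empty, D feasible : both values are ⊤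
      obtain ⟨u₀, hu₀⟩ := h.resolve_left hPne
      rw [Set.not_nonempty_iff_eq_empty.mp hPne]
      simp only [Set.image_empty, sInf_empty]
      symm
      rw [sSup_eq_top]
      intro vE hvE
      rcases EReal.lt_iff_exists_real_btwn.mp hvE with ⟨r, hr1, hr2⟩
      rcases farkas_ineq a b with ⟨x, hx0, hxf⟩ | ⟨w, hw0, hwA, hwb⟩
      · exact absurd ⟨x, hx0, hxf⟩ hPne
      · set t : ℝ := max 0 ((-r - 1 - b ⬝ᵥ u₀) / (b ⬝ᵥ w)) with htdef
        have ht0 : 0 ≤ t := le_max_left _ _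
        have hmem : u₀ + t • w ∈ D := by
          refine ⟨fun k => by
            simp only [Pi.add_apply, Pi.smul_apply, smul_eq_mul, Pi.zero_apply]
            have h1 : (0:ℝ) ≤ u₀ k := hu₀.1 k
            have h2 : (0:ℝ) ≤ w k := hw0 k
            nlinarith, fun j => ?_⟩
          have h1 := hu₀.2 j
          have h2 := hwA j
          rw [dotProduct_add, dotProduct_smul, smul_eq_mul]
          nlinarith
        have hval : r < -(b ⬝ᵥ (u₀ + t • w)) := by
          rw [dotProduct_add, dotProduct_smul, smul_eq_mul]
          have hle : (-r - 1 - b ⬝ᵥ u₀) / (b ⬝ᵥ w) ≤ t := le_max_right _ _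
          have h3 : t * (b ⬝ᵥ w) ≤ ((-r - 1 - b ⬝ᵥ u₀) / (b ⬝ᵥ w)) * (b ⬝ᵥ w) :=
            mul_le_mul_of_nonpos_right hle hwb.le
          rw [div_mul_cancel₀ _ (ne_of_lt hwb)] at h3
          linarith
        exact ⟨_, ⟨u₀ + t • w, hmem, rfl⟩, lt_trans hr1 (EReal.coe_lt_coe_iff.mpr hval)⟩

end Core


section Enc
variable {m n : ℕ} (AL AU : Matrix (Fin m) (Fin n) ℝ) (bL bU : Fin m → ℝ) (cL cU : Fin n → ℝ)

/-- the columns of the worst-case LP -/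
def acol : Fin n → (Fin m ⊕ Fin m) → ℝ :=
  fun j => Sum.elim (fun k => AL k j) (fun k => -(AU k j))

def bvec : (Fin m ⊕ Fin m) → ℝ := Sum.elim bU (fun k => -(bL k))

lemma mulVec_mono {A B : Matrix (Fin m) (Fin n) ℝ} {x : Fin n → ℝ}
    (hAB : ∀ k j, A k j ≤ B k j) (hx : 0 ≤ x) : A.mulVec x ≤ B.mulVec x := by
  intro k
  simp only [Matrix.mulVec, dotProduct]
  exact Finset.sum_le_sum fun j _ => mul_le_mul_of_nonneg_right (hAB k j) (hx j)

lemma mem_Pcore_iff (x : Fin n → ℝ) :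
    x ∈ {x : Fin n → ℝ | 0 ≤ x ∧ ∑ j, x j • acol AL AU j ≤ bvec bL bU} ↔
    0 ≤ x ∧ AL.mulVec x ≤ bU ∧ bL ≤ AU.mulVec x := by
  have e2 : ∀ k, ∑ j, x j * -(AU k j) = -(AU.mulVec x k) := by
    intro k
    simp only [Matrix.mulVec, dotProduct, ← Finset.sum_neg_distrib]
    exact Finset.sum_congr rfl fun j _ => by ring
  constructor
  · rintro ⟨hx0, hxf⟩
    refine ⟨hx0, fun k => ?_, fun k => ?_⟩
    · have h := hxf (Sum.inl k)
      simp only [acol, bvec, Finset.sum_apply, Pi.smul_apply, smul_eq_mul, Sum.elim_inl] at h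
      simpa [Matrix.mulVec, dotProduct, mul_comm] using h
    · have h := hxf (Sum.inr k)
      simp only [acol, bvec, Finset.sum_apply, Pi.smul_apply, smul_eq_mul, Sum.elim_inr] at h
      rw [e2 k] at h
      linarith
  · rintro ⟨hx0, h1, h2⟩
    refine ⟨hx0, fun p => ?_⟩
    rcases p with k | k
    · have h := h1 k
      simp only [acol, bvec, Finset.sum_apply, Pi.smul_apply, smul_eq_mul, Sum.elim_inl]
      simpa [Matrix.mulVec, dotProduct, mul_comm] using h
    · have h := h2 k
      simp only [acol, bvec, Finset.sum_apply, Pi.smul_apply, smul_eq_mul, Sum.elim_inr]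
      rw [e2 k]
      linarith

lemma acol_dot (j : Fin n) (u : Fin m ⊕ Fin m → ℝ) :
    acol AL AU j ⬝ᵥ u =
      ∑ k, AL k j * u (Sum.inl k) - ∑ k, AU k j * u (Sum.inr k) := by
  simp only [acol, dotProduct, Fintype.sum_sum_type, Sum.elim_inl, Sum.elim_inr, neg_mul,
    Finset.sum_neg_distrib]
  ring

/-- scenario construction from a worst-case-feasible point -/
lemma scenario_of_core (hA : ∀ i j, AL i j ≤ AU i j) (hb : bL ≤ bU)
    {x : Fin n → ℝ} (hx0 : 0 ≤ x) (h1 : AL.mulVec x ≤ bU) (h2 : bL ≤ AU.mulVec x) :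
    ∃ A b, memI AL AU A ∧ bL ≤ b ∧ b ≤ bU ∧ A.mulVec x = b := by
  classical
  set p : Fin m → ℝ := AL.mulVec x with hp
  set q : Fin m → ℝ := AU.mulVec x with hq
  have hpq : ∀ k, p k ≤ q k := mulVec_mono hA hx0
  set b : Fin m → ℝ := fun k => max (bL k) (p k) with hbdef
  have hbL : bL ≤ b := fun k => le_max_left _ _
  have hbU : b ≤ bU := fun k => max_le (hb k) (h1 k)
  have hpb : ∀ k, p k ≤ b k := fun k => le_max_right _ _
  have hbq : ∀ k, b k ≤ q k := fun k => max_le (h2 k) (hpq k)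
  set t : Fin m → ℝ := fun k => if q k = p k then 0 else (b k - p k) / (q k - p k) with htdef
  have hlt : ∀ k, ¬ q k = p k → p k < q k := fun k h =>
    lt_of_le_of_ne (hpq k) (Ne.symm h)
  have ht0 : ∀ k, 0 ≤ t k := by
    intro k
    simp only [htdef]
    split_ifs with h
    · exact le_refl 0
    · exact div_nonneg (by linarith [hpb k]) (by linarith [hlt k h])
  have ht1 : ∀ k, t k ≤ 1 := by
    intro k
    simp only [htdef]
    split_ifs with h
    · exact zero_le_one
    · rw [div_le_one (by linarith [hlt k h])]
      linarith [hbq k]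
  have htq : ∀ k, p k + t k * (q k - p k) = b k := by
    intro k
    simp only [htdef]
    split_ifs with h
    · have : b k = p k := by
        rw [hbdef]
        exact max_eq_right (by rw [← h]; exact h2 k)
      rw [this]; ring
    · rw [div_mul_cancel₀ _ (by intro hc; exact h (by linarith))]
      ring
  refine ⟨fun k j => AL k j + t k * (AU k j - AL k j), b, fun k j => ?_, hbL, hbU, ?_⟩
  · constructor
    · show AL k j ≤ AL k j + t k * (AU k j - AL k j)
      have := mul_nonneg (ht0 k) (sub_nonneg.mpr (hA k j))
      linarith
    · show AL k j + t k * (AU k j - AL k j) ≤ AU k j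
      nlinarith [ht1 k, sub_nonneg.mpr (hA k j), ht0 k]
  · funext k
    show ∑ j, (AL k j + t k * (AU k j - AL k j)) * x j = b k
    calc ∑ j, (AL k j + t k * (AU k j - AL k j)) * x j
        = ∑ j, (AL k j * x j + (t k * (AU k j * x j) - t k * (AL k j * x j))) :=
          Finset.sum_congr rfl fun j _ => by ring
      _ = ∑ j, AL k j * x j +
            (t k * ∑ j, AU k j * x j - t k * ∑ j, AL k j * x j) := by
          rw [Finset.sum_add_distrib, Finset.sum_sub_distrib, Finset.mul_sum, Finset.mul_sum]
      _ = p k + t k * (q k - p k) := by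
          rw [hp, hq]
          simp only [Matrix.mulVec, dotProduct]
          ring
      _ = b k := htq k

/-- the dual correspondences -/
lemma dual_core_of_strong (hA : ∀ i j, AL i j ≤ AU i j) (hb : bL ≤ bU) (hc : cL ≤ cU)
    {y : Fin m → ℝ}
    (hy : ∀ A c, memI AL AU A → cL ≤ c → c ≤ cU → Aᵀ.mulVec y ≤ c) :
    ∃ u : Fin m ⊕ Fin m → ℝ, (0 ≤ u ∧ ∀ j, -cL j ≤ acol AL AU j ⬝ᵥ u) ∧
      ∃ b₀, bL ≤ b₀ ∧ b₀ ≤ bU ∧ -(bvec bL bU ⬝ᵥ u) = b₀ ⬝ᵥ y := by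
  classical
  set u : Fin m ⊕ Fin m → ℝ :=
    Sum.elim (fun k => max (-(y k)) 0) (fun k => max (y k) 0) with hudef
  set Ay : Matrix (Fin m) (Fin n) ℝ :=
    fun k j => if 0 ≤ y k then AU k j else AL k j with hAydef
  have hmem : memI AL AU Ay := by
    intro k j
    show AL k j ≤ (if 0 ≤ y k then AU k j else AL k j) ∧
      (if 0 ≤ y k then AU k j else AL k j) ≤ AU k j
    split_ifs
    · exact ⟨hA k j, le_refl _⟩
    · exact ⟨le_refl _, hA k j⟩
  have hAy := hy Ay cL hmem (le_refl _) hc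
  have hu0 : 0 ≤ u := by
    intro p
    rcases p with k | k <;> simp [hudef]
  refine ⟨u, ⟨hu0, fun j => ?_⟩, ?_⟩
  · have e : acol AL AU j ⬝ᵥ u = -(Ayᵀ.mulVec y j) := by
      rw [acol_dot]
      simp only [Matrix.mulVec, dotProduct, Matrix.transpose_apply]
      rw [← Finset.sum_sub_distrib, ← Finset.sum_neg_distrib]
      refine Finset.sum_congr rfl fun k _ => ?_
      rw [hudef, hAydef]
      by_cases hk : 0 ≤ y k
      · simp only [Sum.elim_inl, Sum.elim_inr, if_pos hk,
          max_eq_right (neg_nonpos.mpr hk), max_eq_left hk]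
        ring
      · simp only [Sum.elim_inl, Sum.elim_inr, if_neg hk,
          max_eq_left (neg_nonneg.mpr (le_of_not_ge hk)),
          max_eq_right (le_of_not_ge hk)]
        ring
    rw [e]
    have := hAy j
    linarith
  · refine ⟨fun k => if 0 ≤ y k then bL k else bU k, ?_, ?_, ?_⟩
    · intro k
      dsimp only
      split_ifs with hk
      · exact le_refl _
      · exact hb k
    · intro k
      dsimp only
      split_ifs with hk
      · exact hb k
      · exact le_refl _
    · have e : bvec bL bU ⬝ᵥ u
          = ∑ k, (bU k * max (-(y k)) 0 + (-(bL k)) * max (y k) 0) := by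
        simp only [bvec, dotProduct, Fintype.sum_sum_type, hudef, Sum.elim_inl, Sum.elim_inr]
        rw [← Finset.sum_add_distrib]
      rw [e, dotProduct, ← Finset.sum_neg_distrib]
      refine Finset.sum_congr rfl fun k _ => ?_
      by_cases hk : 0 ≤ y k
      · simp only [max_eq_right (neg_nonpos.mpr hk), max_eq_left hk, if_pos hk]
        ring
      · simp only [max_eq_left (neg_nonneg.mpr (le_of_not_ge hk)),
          max_eq_right (le_of_not_ge hk), if_neg hk]
        ring

lemma dual_strong_of_core (hA : ∀ i j, AL i j ≤ AU i j)
    {u : Fin m ⊕ Fin m → ℝ} (hu0 : 0 ≤ u) (huf : ∀ j, -cL j ≤ acol AL AU j ⬝ᵥ u) :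
    (∀ A c, memI AL AU A → cL ≤ c → c ≤ cU →
        Aᵀ.mulVec (fun k => u (Sum.inr k) - u (Sum.inl k)) ≤ c) ∧
      ∀ b, bL ≤ b → b ≤ bU →
        -(bvec bL bU ⬝ᵥ u) ≤ b ⬝ᵥ (fun k => u (Sum.inr k) - u (Sum.inl k)) := by
  constructor
  · intro A c hmem hc1 _ j
    have h1 : Aᵀ.mulVec (fun k => u (Sum.inr k) - u (Sum.inl k)) j
        ≤ ∑ k, (AU k j * u (Sum.inr k) - AL k j * u (Sum.inl k)) := by
      simp only [Matrix.mulVec, dotProduct, Matrix.transpose_apply]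
      refine Finset.sum_le_sum fun k _ => ?_
      have e1 : A k j * u (Sum.inr k) ≤ AU k j * u (Sum.inr k) :=
        mul_le_mul_of_nonneg_right (hmem k j).2 (hu0 _)
      have e2 : AL k j * u (Sum.inl k) ≤ A k j * u (Sum.inl k) :=
        mul_le_mul_of_nonneg_right (hmem k j).1 (hu0 _)
      nlinarith
    have h2 : ∑ k, (AU k j * u (Sum.inr k) - AL k j * u (Sum.inl k))
        = -(acol AL AU j ⬝ᵥ u) := by
      rw [acol_dot, neg_sub, ← Finset.sum_sub_distrib]
    have h3 := huf j
    have h4 := hc1 j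
    linarith [h1, h2 ▸ h1]
  · intro b hb1 hb2
    have e : bvec bL bU ⬝ᵥ u
        = ∑ k, (bU k * u (Sum.inl k) + (-(bL k)) * u (Sum.inr k)) := by
      simp only [bvec, dotProduct, Fintype.sum_sum_type, Sum.elim_inl, Sum.elim_inr]
      rw [← Finset.sum_add_distrib]
    rw [e]
    have : b ⬝ᵥ (fun k => u (Sum.inr k) - u (Sum.inl k))
        = ∑ k, (b k * u (Sum.inr k) - b k * u (Sum.inl k)) := by
      rw [dotProduct]
      exact Finset.sum_congr rfl fun k _ => by ring
    rw [this, ← Finset.sum_neg_distrib]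
    refine Finset.sum_le_sum fun k _ => ?_
    have e1 : bL k * u (Sum.inr k) ≤ b k * u (Sum.inr k) :=
      mul_le_mul_of_nonneg_right (hb1 k) (hu0 _)
    have e2 : b k * u (Sum.inl k) ≤ bU k * u (Sum.inl k) :=
      mul_le_mul_of_nonneg_right (hb2 k) (hu0 _)
    nlinarith

end Enc

/-- For a type (A) ILP, the equality
`f̲ = max { min_{b ∈ 𝐛} bᵀy : Aᵀy ≤ c for all A ∈ 𝐀, c ∈ 𝐜 }`
holds iff the primal ILP is weakly feasible or the dual interval system has a
strong solution. -/
theorem typeA_lower_bound_dual_characterization {m n : ℕ}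
    (AL AU : Matrix (Fin m) (Fin n) ℝ) (bL bU : Fin m → ℝ) (cL cU : Fin n → ℝ)
    (hA : ∀ i j, AL i j ≤ AU i j) (hb : bL ≤ bU) (hc : cL ≤ cU) :
    (sInf {v : EReal | ∃ A b c, memI AL AU A ∧ bL ≤ b ∧ b ≤ bU ∧ cL ≤ c ∧ c ≤ cU ∧
          v = primalValA A b c} =
        sSup ((fun y => sInf ((fun b => ((b ⬝ᵥ y : ℝ) : EReal)) '' {b | bL ≤ b ∧ b ≤ bU})) ''
          {y : Fin m → ℝ | ∀ A c, memI AL AU A → cL ≤ c → c ≤ cU → Aᵀ.mulVec y ≤ c})) ↔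
      ((∃ A b, memI AL AU A ∧ bL ≤ b ∧ b ≤ bU ∧
          {x : Fin n → ℝ | A.mulVec x = b ∧ 0 ≤ x}.Nonempty) ∨
       {y : Fin m → ℝ | ∀ A c, memI AL AU A → cL ≤ c → c ≤ cU → Aᵀ.mulVec y ≤ c}.Nonempty) := by
  classical
  have hL : sInf {v : EReal | ∃ A b c, memI AL AU A ∧ bL ≤ b ∧ b ≤ bU ∧ cL ≤ c ∧ c ≤ cU ∧
          v = primalValA A b c}
      = sInf ((fun x => ((cL ⬝ᵥ x : ℝ) : EReal)) ''
          {x : Fin n → ℝ | 0 ≤ x ∧ ∑ j, x j • acol AL AU j ≤ bvec bL bU}) := by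
    apply le_antisymm
    · refine le_sInf ?_
      rintro _ ⟨x, hx, rfl⟩
      obtain ⟨hx0, h1, h2⟩ := (mem_Pcore_iff AL AU bL bU x).mp hx
      obtain ⟨A, b, hmem, hb1, hb2, hAx⟩ := scenario_of_core AL AU bL bU hA hb hx0 h1 h2
      refine le_trans (sInf_le ⟨A, b, cL, hmem, hb1, hb2, le_refl _, hc, rfl⟩) ?_
      exact sInf_le ⟨x, ⟨hAx, hx0⟩, rfl⟩
    · refine le_sInf ?_
      rintro v ⟨A, b, c, hmem, hb1, hb2, hc1, hc2, rfl⟩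
      unfold primalValA
      refine le_sInf ?_
      rintro _ ⟨x, ⟨hAx, hx0⟩, rfl⟩
      have hxcore : x ∈ {x : Fin n → ℝ | 0 ≤ x ∧ ∑ j, x j • acol AL AU j ≤ bvec bL bU} := by
        refine (mem_Pcore_iff AL AU bL bU x).mpr ⟨hx0, ?_, ?_⟩
        · calc AL.mulVec x ≤ A.mulVec x := mulVec_mono (fun k j => (hmem k j).1) hx0
            _ = b := hAx
            _ ≤ bU := hb2
        · calc bL ≤ b := hb1
            _ = A.mulVec x := hAx.symm
            _ ≤ AU.mulVec x := mulVec_mono (fun k j => (hmem k j).2) hx0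
      calc sInf ((fun x => ((cL ⬝ᵥ x : ℝ) : EReal)) ''
              {x : Fin n → ℝ | 0 ≤ x ∧ ∑ j, x j • acol AL AU j ≤ bvec bL bU})
          ≤ ((cL ⬝ᵥ x : ℝ) : EReal) := sInf_le ⟨x, hxcore, rfl⟩
        _ ≤ ((c ⬝ᵥ x : ℝ) : EReal) := by
            refine EReal.coe_le_coe_iff.mpr ?_
            exact Finset.sum_le_sum fun j _ => mul_le_mul_of_nonneg_right (hc1 j) (hx0 j)
  have hR : sSup ((fun y => sInf ((fun b => ((b ⬝ᵥ y : ℝ) : EReal)) '' {b | bL ≤ b ∧ b ≤ bU})) ''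
          {y : Fin m → ℝ | ∀ A c, memI AL AU A → cL ≤ c → c ≤ cU → Aᵀ.mulVec y ≤ c})
      = sSup ((fun u => ((-(bvec bL bU ⬝ᵥ u) : ℝ) : EReal)) ''
          {u : Fin m ⊕ Fin m → ℝ | 0 ≤ u ∧ ∀ j, -cL j ≤ acol AL AU j ⬝ᵥ u}) := by
    apply le_antisymm
    · refine sSup_le ?_
      rintro _ ⟨y, hy, rfl⟩
      obtain ⟨u, ⟨hu0, huf⟩, b₀, hb01, hb02, hbeq⟩ :=
        dual_core_of_strong AL AU bL bU cL cU hA hb hc hy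
      calc sInf ((fun b => ((b ⬝ᵥ y : ℝ) : EReal)) '' {b | bL ≤ b ∧ b ≤ bU})
          ≤ ((b₀ ⬝ᵥ y : ℝ) : EReal) := sInf_le ⟨b₀, ⟨hb01, hb02⟩, rfl⟩
        _ = ((-(bvec bL bU ⬝ᵥ u) : ℝ) : EReal) := by rw [hbeq]
        _ ≤ sSup ((fun u => ((-(bvec bL bU ⬝ᵥ u) : ℝ) : EReal)) ''
              {u : Fin m ⊕ Fin m → ℝ | 0 ≤ u ∧ ∀ j, -cL j ≤ acol AL AU j ⬝ᵥ u}) :=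
            le_sSup ⟨u, ⟨hu0, huf⟩, rfl⟩
    · refine sSup_le ?_
      rintro _ ⟨u, ⟨hu0, huf⟩, rfl⟩
      obtain ⟨hstr, hobj⟩ := dual_strong_of_core AL AU bL bU cL cU hA hu0 huf
      calc ((-(bvec bL bU ⬝ᵥ u) : ℝ) : EReal)
          ≤ sInf ((fun b => ((b ⬝ᵥ (fun k => u (Sum.inr k) - u (Sum.inl k)) : ℝ) : EReal)) ''
              {b | bL ≤ b ∧ b ≤ bU}) := by
            refine le_sInf ?_
            rintro _ ⟨b, ⟨h1, h2⟩, rfl⟩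
            exact EReal.coe_le_coe_iff.mpr (hobj b h1 h2)
        _ ≤ sSup ((fun y => sInf ((fun b => ((b ⬝ᵥ y : ℝ) : EReal)) ''
              {b | bL ≤ b ∧ b ≤ bU})) ''
              {y : Fin m → ℝ | ∀ A c, memI AL AU A → cL ≤ c → c ≤ cU → Aᵀ.mulVec y ≤ c}) :=
            le_sSup ⟨fun k => u (Sum.inr k) - u (Sum.inl k), hstr, rfl⟩
  rw [hL, hR, lp_duality]
  constructor
  · rintro (⟨x, hx⟩ | ⟨u, hu0, huf⟩)
    · obtain ⟨hx0, h1, h2⟩ := (mem_Pcore_iff AL AU bL bU x).mp hx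
      obtain ⟨A, b, hmem, hb1, hb2, hAx⟩ := scenario_of_core AL AU bL bU hA hb hx0 h1 h2
      exact Or.inl ⟨A, b, hmem, hb1, hb2, ⟨x, hAx, hx0⟩⟩
    · exact Or.inr ⟨fun k => u (Sum.inr k) - u (Sum.inl k),
        (dual_strong_of_core AL AU bL bU cL cU hA hu0 huf).1⟩
  · rintro (⟨A, b, hmem, hb1, hb2, x, hAx, hx0⟩ | ⟨y, hy⟩)
    · refine Or.inl ⟨x, (mem_Pcore_iff AL AU bL bU x).mpr ⟨hx0, ?_, ?_⟩⟩
      · calc AL.mulVec x ≤ A.mulVec x := mulVec_mono (fun k j => (hmem k j).1) hx0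
          _ = b := hAx
          _ ≤ bU := hb2
      · calc bL ≤ b := hb1
          _ = A.mulVec x := hAx.symm
          _ ≤ AU.mulVec x := mulVec_mono (fun k j => (hmem k j).2) hx0
    · obtain ⟨u, hu, _⟩ := dual_core_of_strong AL AU bL bU cL cU hA hb hc hy
      exact Or.inr ⟨u, hu⟩
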